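/- arXiv:2010.15102 — 8 statements merged into one kernel-verified Lean document; each statement's English description precedes it below -/
import Mathlib

section
/- Suppose Assumption (Ass) holds, so the pseudo-Friedrichs extension H_V is defined by H_V = G₀^{1/2}(H₀G₀^{-1} + [B G₀^{-1/2}]* A G₀^{-1/2}) G₀^{1/2} with its natural domain. Then for any λ₀ ∈ ρ(H₀) with −1 ∉ σ(K(λ₀)), λ₀ ∈ ρ(H_V) and (H_V − λ₀)^{-1} = G₀^{-1/2}([H₀ − λ₀]G₀^{-1} + [B G₀^{-1/2}]* A G₀^{-1/2})^{-1} G₀^{-1/2}. In particular, H_V is a closed operator. -/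
open ContinuousLinearMap

noncomputable section

/-- An abstract encoding of the setting of Assumption 1.1 of
Hansmann–Krejčiřík.  The self-adjoint operator `H₀` in the Hilbert space `H`
is encoded through the *bounded* operators
`S = G₀^{-1/2} = (|H₀|+1)^{-1/2}` and `T = H₀ G₀^{-1}`,
and the relatively bounded factors `A, B` of the perturbation `V = B^*A`
through the bounded operators `a = A G₀^{-1/2}` and `b = B G₀^{-1/2}`. -/
structure BSSetup (H H' : Type*) [NormedAddCommGroup H] [InnerProductSpace ℂ H]
    [CompleteSpace H] [NormedAddCommGroup H'] [InnerProductSpace ℂ H'] [CompleteSpace H'] where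
  /-- `S` represents `G₀^{-1/2} = (|H₀|+1)^{-1/2}`. -/
  S : H →L[ℂ] H
  /-- `T` represents `H₀ G₀^{-1}`. -/
  T : H →L[ℂ] H
  /-- `a` represents the bounded operator `A G₀^{-1/2}`. -/
  a : H →L[ℂ] H'
  /-- `b` represents the bounded operator `B G₀^{-1/2}`. -/
  b : H →L[ℂ] H'
  S_sa : IsSelfAdjoint S
  T_sa : IsSelfAdjoint T
  S_pos : ∀ x : H, 0 ≤ (inner ℂ x (S x) : ℂ).re
  S_inj : Function.Injective S
  S_dense : DenseRange S
  S_norm : ‖S‖ ≤ 1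
  comm : S * T = T * S
  /-- `|H₀| G₀^{-1} = 1 - S²`, i.e. `T² = (H₀ G₀^{-1})² = (1-S²)²`. -/
  T_sq : T * T = (1 - S * S) * (1 - S * S)

namespace BSSetup

variable {H H' : Type*} [NormedAddCommGroup H] [InnerProductSpace ℂ H]
  [CompleteSpace H] [NormedAddCommGroup H'] [InnerProductSpace ℂ H'] [CompleteSpace H']
  (P : BSSetup H H')

/-- The bounded operator `(H₀ - z) G₀^{-1}`. -/
def Tz (z : ℂ) : H →L[ℂ] H := P.T - z • (P.S * P.S)

/-- The resolvent set `ρ(H₀)`:  `z ∈ ρ(H₀)` iff `(H₀ - z)G₀^{-1}` is boundedly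
invertible. -/
def res : Set ℂ := {z | IsUnit (P.Tz z)}

/-- The spectrum `σ(H₀)`. -/
def spec : Set ℂ := {z | ¬ IsUnit (P.Tz z)}

/-- The point spectrum `σ_p(H₀)`: eigenvectors of `H₀` are of the form `ψ = G₀^{-1} x`. -/
def pointSpec : Set ℂ := {z | ∃ x : H, x ≠ 0 ∧ P.Tz z x = 0}

/-- The continuous spectrum `σ_c(H₀)`: `z ∈ σ(H₀)`, `z` is not an eigenvalue and
the range of `H₀ - z` (which equals the range of `(H₀-z)G₀^{-1}`) is dense. -/
def contSpec : Set ℂ :=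
  {z | ¬ IsUnit (P.Tz z) ∧ (∀ x : H, P.Tz z x = 0 → x = 0) ∧ DenseRange (P.Tz z)}

/-- The Birman–Schwinger operator
`K(z) = [A G₀^{-1/2}][G₀(H₀ - z)^{-1}][B G₀^{-1/2}]^*`. -/
def K (z : ℂ) : H' →L[ℂ] H' :=
  P.a ∘L (Ring.inverse (P.Tz z)) ∘L (ContinuousLinearMap.adjoint P.b)

/-- `W = H₀ G₀^{-1} + [B G₀^{-1/2}]^* A G₀^{-1/2}`; the pseudo-Friedrichs extension is
`H_V = G₀^{1/2} W G₀^{1/2}`, i.e. `ψ = S u ∈ Dom(H_V)` iff `W u ∈ Ran S`, and then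
`H_V (S u) = y` where `W u = S y`. -/
def W : H →L[ℂ] H := P.T + (ContinuousLinearMap.adjoint P.b) ∘L P.a

/-- The bounded operator `(H₀ - z)G₀^{-1} + [B G₀^{-1/2}]^* A G₀^{-1/2}`,
representing `(H_V - z)` conjugated with `G₀^{1/2}`. -/
def Wz (z : ℂ) : H →L[ℂ] H := P.W - z • (P.S * P.S)

/-- Assumption 1.1 (Ass): there is `λ₀ ∈ ρ(H₀)` with `-1 ∉ σ(K(λ₀))`. -/
def Ass : Prop := ∃ μ : ℂ, IsUnit (P.Tz μ) ∧ (-1 : ℂ) ∉ spectrum ℂ (P.K μ)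

end BSSetup


private lemma swap_isUnit {H H' : Type*} [NormedAddCommGroup H] [InnerProductSpace ℂ H]
    [CompleteSpace H] [NormedAddCommGroup H'] [InnerProductSpace ℂ H'] [CompleteSpace H']
    (X : H →L[ℂ] H') (Y : H' →L[ℂ] H) (h : IsUnit (1 + X ∘L Y)) :
    IsUnit (1 + Y ∘L X) := by
  obtain ⟨u, hu1, hu2⟩ := isUnit_iff_exists.mp h
  refine isUnit_iff_exists.mpr ⟨1 - Y ∘L u ∘L X, ?_, ?_⟩
  · have key : (1 : H' →L[ℂ] H') - u - (X ∘L Y) ∘L u = 0 := by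
      have : ((1 + X ∘L Y) : H' →L[ℂ] H') ∘L u = 1 := hu1
      calc (1 : H' →L[ℂ] H') - u - (X ∘L Y) ∘L u
          = 1 - ((1 + X ∘L Y) ∘L u) := by
            simp only [ContinuousLinearMap.add_comp, ContinuousLinearMap.one_def,
              ContinuousLinearMap.id_comp]
            abel
        _ = 0 := by rw [this]; simp
    have expand : (1 + Y ∘L X) * (1 - Y ∘L u ∘L X)
        = 1 + Y ∘L ((1 - u - (X ∘L Y) ∘L u) ∘L X) := by
      simp only [mul_one_add, one_add_mul, mul_sub, sub_mul, mul_one, one_mul]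
      simp only [ContinuousLinearMap.mul_def, ContinuousLinearMap.sub_comp,
        ContinuousLinearMap.comp_sub, ContinuousLinearMap.add_comp,
        ContinuousLinearMap.comp_add, ContinuousLinearMap.comp_assoc,
        ContinuousLinearMap.one_def, ContinuousLinearMap.id_comp,
        ContinuousLinearMap.comp_id]
      abel
    rw [expand, key]
    simp
  · have key : (1 : H' →L[ℂ] H') - u - u ∘L (X ∘L Y) = 0 := by
      have : u ∘L ((1 + X ∘L Y) : H' →L[ℂ] H') = 1 := hu2
      calc (1 : H' →L[ℂ] H') - u - u ∘L (X ∘L Y)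
          = 1 - (u ∘L (1 + X ∘L Y)) := by
            simp only [ContinuousLinearMap.comp_add, ContinuousLinearMap.one_def,
              ContinuousLinearMap.comp_id]
            abel
        _ = 0 := by rw [this]; simp
    have expand : (1 - Y ∘L u ∘L X) * (1 + Y ∘L X)
        = 1 + Y ∘L ((1 - u - u ∘L (X ∘L Y)) ∘L X) := by
      simp only [mul_one_add, one_add_mul, mul_sub, sub_mul, mul_one, one_mul]
      simp only [ContinuousLinearMap.mul_def, ContinuousLinearMap.sub_comp,
        ContinuousLinearMap.comp_sub, ContinuousLinearMap.add_comp,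
        ContinuousLinearMap.comp_add, ContinuousLinearMap.comp_assoc,
        ContinuousLinearMap.one_def, ContinuousLinearMap.id_comp,
        ContinuousLinearMap.comp_id]
      abel
    rw [expand, key]
    simp

/-- Section 2, eq. (2.6).  Under Assumption (Ass), for any
`λ₀ ∈ ρ(H₀)` with `-1 ∉ σ(K(λ₀))`, the pseudo-Friedrichs extension
`H_V = G₀^{1/2}(H₀G₀^{-1} + [B G₀^{-1/2}]^* A G₀^{-1/2}) G₀^{1/2}` satisfies
`λ₀ ∈ ρ(H_V)` with
`(H_V - λ₀)^{-1} = G₀^{-1/2}([H₀-λ₀]G₀^{-1} + [B G₀^{-1/2}]^* A G₀^{-1/2})^{-1} G₀^{-1/2}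
 = S (W - λ₀ S²)⁻¹ S`; in particular `H_V` (whose graph is
`{(S u, y) | W u = S y}`) is a closed operator.  Here `ψ = S u ∈ Dom(H_V)` iff
`W u ∈ Ran S`, and `H_V (S u) = y` where `W u = S y`. -/
theorem BSSetup.resolvent_formula_and_closed
    {H H' : Type*} [NormedAddCommGroup H] [InnerProductSpace ℂ H]
    [CompleteSpace H] [NormedAddCommGroup H'] [InnerProductSpace ℂ H'] [CompleteSpace H']
    (P : BSSetup H H') (μ : ℂ) (hμ : IsUnit (P.Tz μ))
    (hK : (-1 : ℂ) ∉ spectrum ℂ (P.K μ)) :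
    IsUnit (P.Wz μ) ∧
    (∀ x : H, ∃ u : H,
        (P.S * Ring.inverse (P.Wz μ) * P.S) x = P.S u ∧
        P.W u = P.S (x + μ • (P.S * Ring.inverse (P.Wz μ) * P.S) x)) ∧
    (∀ u y : H, P.W u = P.S y →
        (P.S * Ring.inverse (P.Wz μ) * P.S) (y - μ • P.S u) = P.S u) ∧
    IsClosed {p : H × H | ∃ u y : H, p.1 = P.S u ∧ P.W u = P.S y ∧ p.2 = y} := by

  -- Step 1: `Wz μ` is a unit.
  set C : H →L[ℂ] H := (ContinuousLinearMap.adjoint P.b) ∘L P.a with hC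
  have hTinv : Ring.inverse (P.Tz μ) * P.Tz μ = 1 := Ring.inverse_mul_cancel _ hμ
  have hTinv' : P.Tz μ * Ring.inverse (P.Tz μ) = 1 := Ring.mul_inverse_cancel _ hμ
  have hKunit : IsUnit (1 + P.K μ) := by
    have h1 : IsUnit (algebraMap ℂ (H' →L[ℂ] H') (-1) - P.K μ) := by
      rw [spectrum.notMem_iff] at hK; exact hK
    have h2 : (algebraMap ℂ (H' →L[ℂ] H') (-1) - P.K μ) = -(1 + P.K μ) := by
      simp [Algebra.algebraMap_eq_smul_one]; abel
    rw [h2] at h1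
    exact (IsUnit.neg_iff _).mp h1
  have hswap : IsUnit (1 + ((ContinuousLinearMap.adjoint P.b) ∘L
      (P.a ∘L (Ring.inverse (P.Tz μ) : H →L[ℂ] H)))) := by
    apply swap_isUnit (P.a ∘L (Ring.inverse (P.Tz μ))) (ContinuousLinearMap.adjoint P.b)
    have : P.a ∘L Ring.inverse (P.Tz μ) ∘L ContinuousLinearMap.adjoint P.b
        = (P.a ∘L Ring.inverse (P.Tz μ)) ∘L ContinuousLinearMap.adjoint P.b := by
      rw [ContinuousLinearMap.comp_assoc]
    exact this ▸ hKunit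
  have hfact : P.Wz μ = (1 + ((ContinuousLinearMap.adjoint P.b) ∘L
      (P.a ∘L (Ring.inverse (P.Tz μ) : H →L[ℂ] H)))) * P.Tz μ := by
    have : ((ContinuousLinearMap.adjoint P.b) ∘L
        (P.a ∘L (Ring.inverse (P.Tz μ) : H →L[ℂ] H))) * P.Tz μ = C := by
      rw [hC, ContinuousLinearMap.mul_def, ContinuousLinearMap.comp_assoc,
        ContinuousLinearMap.comp_assoc, ← ContinuousLinearMap.mul_def (Ring.inverse (P.Tz μ)),
        hTinv]
      simp [ContinuousLinearMap.one_def]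
    rw [one_add_mul, this, BSSetup.Wz, BSSetup.W, BSSetup.Tz]
    try rw [one_mul]
    abel
  have hW : IsUnit (P.Wz μ) := hfact ▸ hswap.mul hμ
  set R : H →L[ℂ] H := Ring.inverse (P.Wz μ) with hR
  have hRW : R * P.Wz μ = 1 := Ring.inverse_mul_cancel _ hW
  have hWR : P.Wz μ * R = 1 := Ring.mul_inverse_cancel _ hW
  have hWeq : ∀ v : H, P.W v = P.Wz μ v + μ • P.S (P.S v) := by
    intro v
    simp [BSSetup.Wz, ContinuousLinearMap.sub_apply, ContinuousLinearMap.smul_apply,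
      ContinuousLinearMap.mul_apply]
  have hthird : ∀ u y : H, P.W u = P.S y →
      (P.S * R * P.S) (y - μ • P.S u) = P.S u := by
    intro u y huy
    have h1 : P.S (y - μ • P.S u) = P.Wz μ u := by
      rw [map_sub, map_smul, ← huy, hWeq u]; abel
    have h2 : (P.S * R * P.S) (y - μ • P.S u) = P.S (R (P.S (y - μ • P.S u))) := rfl
    have h3 : R ((P.Wz μ) u) = u := by
      have h4 := ContinuousLinearMap.ext_iff.mp hRW u
      simpa using h4
    rw [h2, h1, h3]
  refine ⟨hW, ?_, hthird, ?_⟩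
  · intro x
    refine ⟨R (P.S x), rfl, ?_⟩
    have h1 : P.Wz μ (R (P.S x)) = P.S x := by
      rw [← ContinuousLinearMap.mul_apply, hWR]; simp
    rw [hWeq, h1, map_add, map_smul]
    rfl
  · have hset : {p : H × H | ∃ u y : H, p.1 = P.S u ∧ P.W u = P.S y ∧ p.2 = y}
        = {p : H × H | p.1 - (P.S * R * P.S) (p.2 - μ • p.1) = 0} := by
      ext p
      simp only [Set.mem_setOf_eq, sub_eq_zero]
      constructor
      · rintro ⟨u, y, h1, h2, h3⟩
        rw [h1, h3]
        exact (hthird u y h2).symm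
      · intro h
        refine ⟨R (P.S (p.2 - μ • p.1)), p.2, h, ?_, rfl⟩
        have h1 : P.Wz μ (R (P.S (p.2 - μ • p.1))) = P.S (p.2 - μ • p.1) := by
          rw [← ContinuousLinearMap.mul_apply, hWR]; simp
        have hSu : P.S (R (P.S (p.2 - μ • p.1))) = p.1 := h.symm
        rw [hWeq, h1, hSu, map_sub, map_smul]
        abel
    rw [hset]
    have hcont : Continuous fun p : H × H => p.1 - (P.S * R * P.S) (p.2 - μ • p.1) := by
      fun_prop
    exact isClosed_eq hcont continuous_const
end
end

section
/- Suppose Assumption (Ass) holds and let H_V be the pseudo-Friedrichs extension. Then H_V is densely defined, i.e., Dom(H_V) is dense in H. -/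
open ContinuousLinearMap

noncomputable section

/-- Section 2.  Under Assumption (Ass) the pseudo-Friedrichs extension
`H_V` is densely defined: its domain `{ψ = S u | W u ∈ Ran S}` is dense in `H`. -/
theorem BSSetup.domain_dense
    {H H' : Type*} [NormedAddCommGroup H] [InnerProductSpace ℂ H]
    [CompleteSpace H] [NormedAddCommGroup H'] [InnerProductSpace ℂ H'] [CompleteSpace H']
    (P : BSSetup H H') (hAss : P.Ass) :
    Dense {ψ : H | ∃ u y : H, ψ = P.S u ∧ P.W u = P.S y} := by

  classical
  obtain ⟨μ, hT, hK⟩ := hAss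
  -- `1 + K μ` is a unit
  have hK1 : IsUnit (1 + P.K μ) := by
    rw [spectrum.notMem_iff, map_neg, map_one] at hK
    have h' : IsUnit (-(1 + P.K μ)) := by
      convert hK using 1; rw [neg_add, sub_eq_add_neg]
    exact (IsUnit.neg_iff _).mp h'
  set X : H' →L[ℂ] H' := Ring.inverse (1 + P.K μ) with hXdef
  have hX1 : (1 + P.K μ) * X = 1 := Ring.mul_inverse_cancel _ hK1
  have hX2 : X * (1 + P.K μ) = 1 := Ring.inverse_mul_cancel _ hK1
  set R : H →L[ℂ] H := Ring.inverse (P.Tz μ) with hRdef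
  have hTR : P.Tz μ * R = 1 := Ring.mul_inverse_cancel _ hT
  set C : H' →L[ℂ] H := R ∘L ContinuousLinearMap.adjoint P.b with hCdef
  have hKC : ∀ x : H', P.K μ x = P.a (C x) := fun x => rfl
  set M : H →L[ℂ] H := 1 + C ∘L P.a with hMdef
  set N : H →L[ℂ] H := 1 - C ∘L (X ∘L P.a) with hNdef
  have hMN : M * N = 1 := by
    ext x
    have hXx : X (P.a x) + P.K μ (X (P.a x)) = P.a x := by
      have := congrFun (congrArg DFunLike.coe hX1) (P.a x)
      simpa [mul_apply, add_apply] using this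
    simp only [hMdef, hNdef, mul_apply_eq_comp, _root_.add_apply, _root_.sub_apply, one_apply_eq_self, comp_apply,
      map_sub, map_add, hKC]
    rw [← hKC]
    have key : C (X (P.a x)) + C (P.K μ (X (P.a x))) = C (P.a x) := by
      rw [← map_add, hXx]
    rw [← key]; abel
  have hNM : N * M = 1 := by
    ext x
    have hXx : X (P.a x + P.K μ (P.a x)) = P.a x := by
      have := congrFun (congrArg DFunLike.coe hX2) (P.a x)
      simpa [mul_apply, add_apply] using this
    simp only [hMdef, hNdef, mul_apply_eq_comp, _root_.add_apply, _root_.sub_apply, one_apply_eq_self, comp_apply,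
      map_add, hKC]
    rw [← hKC]
    have key : C (X (P.a x)) + C (X (P.K μ (P.a x))) = C (P.a x) := by
      rw [← map_add, ← map_add, hXx]
    rw [← key]; abel
  have hMunit : IsUnit M := ⟨⟨M, N, hMN, hNM⟩, rfl⟩
  have hWz : P.Wz μ = P.Tz μ + ContinuousLinearMap.adjoint P.b ∘L P.a := by
    rw [BSSetup.Wz, BSSetup.W, BSSetup.Tz, add_sub_right_comm]
  have h2 : P.Tz μ * (C ∘L P.a) = ContinuousLinearMap.adjoint P.b ∘L P.a := by
    ext x
    have := congrFun (congrArg DFunLike.coe hTR) (ContinuousLinearMap.adjoint P.b (P.a x))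
    simpa [mul_apply, comp_apply, hCdef] using this
  have hfac : P.Wz μ = P.Tz μ * M := by
    rw [hMdef, mul_add, mul_one, h2, hWz]
  have hWunit : IsUnit (P.Wz μ) := hfac ▸ hT.mul hMunit
  set u := hWunit.unit with hu
  set inv : H →L[ℂ] H := ↑u⁻¹ with hinvdef
  have hcoe : (↑u : H →L[ℂ] H) = P.Wz μ := hWunit.unit_spec
  have huinv : ∀ y : H, P.Wz μ (inv y) = y := by
    intro y
    conv_lhs => rw [← hcoe]
    show ((↑u : H →L[ℂ] H) * (↑u⁻¹ : H →L[ℂ] H)) y = y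
    rw [u.mul_inv]; rfl
  have hmem : ∀ y : H, P.S (inv (P.S y)) ∈
      {ψ : H | ∃ u y : H, ψ = P.S u ∧ P.W u = P.S y} := by
    intro y
    refine ⟨inv (P.S y), y + μ • P.S (inv (P.S y)), rfl, ?_⟩
    have hw : P.W (inv (P.S y)) = P.Wz μ (inv (P.S y)) + μ • (P.S * P.S) (inv (P.S y)) := by
      simp [BSSetup.Wz, sub_apply, smul_apply]
    rw [hw, huinv, map_add, map_smul]
    simp [mul_apply]
  -- dense range of the composition
  have hinvsurj : Function.Surjective inv := by
    intro x
    refine ⟨P.Wz μ x, ?_⟩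
    conv_lhs => rw [← hcoe]
    show ((↑u⁻¹ : H →L[ℂ] H) * (↑u : H →L[ℂ] H)) x = x
    rw [u.inv_mul]; rfl
  have hdr : DenseRange (fun y : H => P.S (inv (P.S y))) := by
    have h1 : DenseRange (fun y : H => inv (P.S y)) :=
      hinvsurj.denseRange.comp P.S_dense inv.continuous
    exact P.S_dense.comp h1 P.S.continuous
  refine Dense.mono ?_ hdr
  rintro _ ⟨y, rfl⟩
  exact hmem y
end
end

section
/- Suppose Assumption (Ass) holds. Then the pseudo-Friedrichs extension H_V satisfies the generalised second resolvent identity: for all z ∈ ρ(H₀) ∩ ρ(H_V), (H_V − z)^{-1} − (H₀ − z)^{-1} = −[B(H₀ − z̄)^{-1}]* A (H_V − z)^{-1}. -/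
open ContinuousLinearMap

noncomputable section

/-- Proposition 2.2, generalised second resolvent identity.
Under Assumption (Ass), for all `z ∈ ρ(H₀) ∩ ρ(H_V)`,
`(H_V - z)^{-1} - (H₀ - z)^{-1} = -[B(H₀ - z̄)^{-1}]^* A (H_V - z)^{-1}`.
Here `(H_V - z)^{-1} = S (W - z S²)⁻¹ S`, `(H₀ - z)^{-1} = S² ((H₀-z)G₀^{-1})⁻¹`,
`B(H₀ - z̄)^{-1} = b ∘ (S ((H₀ - z̄)G₀^{-1})⁻¹)` and
`A(H_V - z)^{-1} = a ∘ ((W - z S²)⁻¹ S)`. -/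
theorem BSSetup.second_resolvent_identity
    {H H' : Type*} [NormedAddCommGroup H] [InnerProductSpace ℂ H]
    [CompleteSpace H] [NormedAddCommGroup H'] [InnerProductSpace ℂ H'] [CompleteSpace H']
    (P : BSSetup H H') (hAss : P.Ass) (z : ℂ)
    (hz0 : IsUnit (P.Tz z)) (hzV : IsUnit (P.Wz z)) :
    P.S * Ring.inverse (P.Wz z) * P.S - P.S * P.S * Ring.inverse (P.Tz z)
      = -((ContinuousLinearMap.adjoint
            (P.b ∘L (P.S * Ring.inverse (P.Tz (starRingEnd ℂ z))))) ∘L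
          (P.a ∘L (Ring.inverse (P.Wz z) * P.S))) := by
    classical
  set S := P.S with hSdef
  set t := Ring.inverse (P.Tz z) with htdef
  set w := Ring.inverse (P.Wz z) with hwdef
  set V := (ContinuousLinearMap.adjoint P.b) ∘L P.a with hVdef
  have hS : ContinuousLinearMap.adjoint S = S := by
    rw [← ContinuousLinearMap.star_eq_adjoint]; exact P.S_sa
  have hTstar : star (P.Tz (starRingEnd ℂ z)) = P.Tz z := by
    have hT : star P.T = P.T := P.T_sa
    have hSs : star S = S := P.S_sa
    simp [BSSetup.Tz, star_sub, star_smul, hT, hSs, star_mul, mul_comm, show star P.S = P.S from P.S_sa]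
  have hadj : ContinuousLinearMap.adjoint (Ring.inverse (P.Tz (starRingEnd ℂ z))) = t := by
    rw [← ContinuousLinearMap.star_eq_adjoint, ← Ring.inverse_star, hTstar]
  -- commutation of S with Tz z and with t
  have hcomm : Commute S (P.Tz z) := by
    have h1 : Commute S P.T := P.comm
    have h2 : Commute S (z • (S * S)) := by
      refine Commute.smul_right ?_ z
      exact (Commute.refl S).mul_right (Commute.refl S)
    exact h1.sub_right h2
  have hcommt : Commute S t := by
    have hu : Commute S (hz0.unit : H →L[ℂ] H) := by rw [IsUnit.unit_spec]; exact hcomm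
    rw [htdef, ← hz0.unit_spec, Ring.inverse_unit]
    exact hu.units_inv_right
  have ht1 : t * P.Tz z = 1 := Ring.inverse_mul_cancel _ hz0
  have hw2 : P.Wz z * w = 1 := Ring.mul_inverse_cancel _ hzV
  have hWT : P.Wz z = P.Tz z + V := by
    simp only [BSSetup.Wz, BSSetup.W, BSSetup.Tz, hVdef]
    abel
  have hTzw : P.Tz z * w = 1 - V * w := by
    have : (P.Tz z + V) * w = 1 := by rw [← hWT]; exact hw2
    rw [add_mul] at this
    linear_combination (norm := abel) this
  -- key computation
  have key : P.Tz z * (S * w * S) = S * S - S * (V * (w * S)) := by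
    rw [← mul_assoc, ← mul_assoc, ← hcomm.eq, mul_assoc S, hTzw]
    noncomm_ring
  have e1 : S * w * S = t * (S * S) - t * (S * (V * (w * S))) := by
    calc S * w * S = (t * P.Tz z) * (S * w * S) := by rw [ht1, one_mul]
      _ = t * (P.Tz z * (S * w * S)) := by rw [mul_assoc]
      _ = t * (S * S - S * (V * (w * S))) := by rw [key]
      _ = t * (S * S) - t * (S * (V * (w * S))) := by rw [mul_sub]
  have e2 : S * S * t = t * (S * S) := by
    rw [mul_assoc, hcommt.eq, ← mul_assoc, hcommt.eq, mul_assoc]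
  -- simplify the RHS
  have hR : (ContinuousLinearMap.adjoint
            (P.b ∘L (S * Ring.inverse (P.Tz (starRingEnd ℂ z))))) ∘L
          (P.a ∘L (w * S)) = t * (S * (V * (w * S))) := by
    rw [show S * Ring.inverse (P.Tz (starRingEnd ℂ z))
        = S ∘L Ring.inverse (P.Tz (starRingEnd ℂ z)) from rfl,
      ContinuousLinearMap.adjoint_comp, ContinuousLinearMap.adjoint_comp, hadj, hS]
    calc ((t ∘L S) ∘L ContinuousLinearMap.adjoint P.b) ∘L (P.a ∘L (w * S))
        = t * S * (ContinuousLinearMap.adjoint P.b ∘L (P.a ∘L (w * S))) := rfl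
      _ = t * S * (V * (w * S)) := by
          rw [hVdef]
          congr 1
      _ = t * (S * (V * (w * S))) := by rw [mul_assoc]
  rw [hR, e1, e2]
  abel
end
end

section
/- Suppose Assumption (Ass) holds and let H_V be the pseudo-Friedrichs extension. If H_V ψ = λψ for some λ ∈ ℂ \ σ(H₀) and nonzero ψ ∈ Dom(H_V), then g := Aψ ≠ 0 and K(λ)g = −g. In particular, −1 ∈ σ_p(K(λ)). -/
open ContinuousLinearMap

noncomputable section

/-- Theorem 3.1.  Under Assumption (Ass), if `H_V ψ = μ ψ` for some
`μ ∈ ℂ \ σ(H₀)` and nonzero `ψ = S u ∈ Dom(H_V)` (the eigenvalue equation being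
encoded by `u ≠ 0` and `(W - μ S²) u = 0`), then `g := Aψ = a u ≠ 0` and
`K(μ) g = -g`; in particular `-1 ∈ σ_p(K(μ))`. -/
theorem BSSetup.birman_schwinger_forward
    {H H' : Type*} [NormedAddCommGroup H] [InnerProductSpace ℂ H]
    [CompleteSpace H] [NormedAddCommGroup H'] [InnerProductSpace ℂ H'] [CompleteSpace H']
    (P : BSSetup H H') (hAss : P.Ass) (μ : ℂ) (hμ : IsUnit (P.Tz μ))
    (u : H) (hu : u ≠ 0) (heig : P.Wz μ u = 0) :
    P.a u ≠ 0 ∧ P.K μ (P.a u) = -(P.a u) := by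
  have hinv : ∀ x : H, Ring.inverse (P.Tz μ) (P.Tz μ x) = x := by
    intro x
    have h := Ring.inverse_mul_cancel _ hμ
    calc Ring.inverse (P.Tz μ) (P.Tz μ x) = (Ring.inverse (P.Tz μ) * P.Tz μ) x := rfl
      _ = x := by rw [h]; rfl
  have hW : P.Tz μ u = -(ContinuousLinearMap.adjoint P.b (P.a u)) := by
    have h : P.Wz μ u = P.Tz μ u + ContinuousLinearMap.adjoint P.b (P.a u) := by
      simp [BSSetup.Wz, BSSetup.W, BSSetup.Tz]
      abel
    rw [heig] at h
    exact eq_neg_of_add_eq_zero_left h.symm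
  constructor
  · intro ha
    apply hu
    have h0 : P.Tz μ u = 0 := by rw [hW, ha, map_zero, neg_zero]
    have := hinv u
    rw [h0, map_zero] at this
    exact this.symm
  · have : P.K μ (P.a u) = P.a (Ring.inverse (P.Tz μ) (ContinuousLinearMap.adjoint P.b (P.a u))) := rfl
    rw [this, ← neg_neg (ContinuousLinearMap.adjoint P.b (P.a u)), ← hW, map_neg, hinv, map_neg]
end
end

section
/- Suppose Assumption (Ass) holds and let H_V be the pseudo-Friedrichs extension. If K(λ)g = −g for some λ ∈ ℂ \ σ(H₀) and nonzero g ∈ H', then ψ := G₀^{1/2}(H₀ − λ)^{-1}[B G₀^{-1/2}]* g is nonzero, ψ ∈ Dom(H_V) and H_V ψ = λψ. In particular, λ ∈ σ_p(H_V). -/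
open ContinuousLinearMap

noncomputable section

/-- Theorem 3.2.  Under Assumption (Ass), if `K(μ) g = -g` for some
`μ ∈ ℂ \ σ(H₀)` and nonzero `g ∈ H'`, then
`ψ := G₀^{1/2}(H₀ - μ)^{-1}[B G₀^{-1/2}]^* g = S u` with
`u := ((H₀-μ)G₀^{-1})⁻¹ b^* g` is a nonzero element of `Dom(H_V)` with `H_V ψ = μ ψ`
(encoded by `(W - μ S²) u = 0`); in particular `μ ∈ σ_p(H_V)`. -/
theorem BSSetup.birman_schwinger_backward
    {H H' : Type*} [NormedAddCommGroup H] [InnerProductSpace ℂ H]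
    [CompleteSpace H] [NormedAddCommGroup H'] [InnerProductSpace ℂ H'] [CompleteSpace H']
    (P : BSSetup H H') (hAss : P.Ass) (μ : ℂ) (hμ : IsUnit (P.Tz μ))
    (g : H') (hg : g ≠ 0) (hK : P.K μ g = -g) :
    P.S (Ring.inverse (P.Tz μ) (ContinuousLinearMap.adjoint P.b g)) ≠ 0 ∧
    P.Wz μ (Ring.inverse (P.Tz μ) (ContinuousLinearMap.adjoint P.b g)) = 0 := by
  set u := Ring.inverse (P.Tz μ) (ContinuousLinearMap.adjoint P.b g) with hu_def
  have hKu : P.a u = -g := hK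
  have hTu : P.Tz μ u = ContinuousLinearMap.adjoint P.b g := by
    have h1 : P.Tz μ * Ring.inverse (P.Tz μ) = 1 := Ring.mul_inverse_cancel _ hμ
    have := congrFun (congrArg DFunLike.coe h1) (ContinuousLinearMap.adjoint P.b g)
    simpa [ContinuousLinearMap.mul_apply] using this
  have hune : u ≠ 0 := by
    intro h
    apply hg
    have : P.a u = 0 := by rw [h, map_zero]
    rw [hKu] at this
    simpa using this
  constructor
  · intro h
    exact hune (P.S_inj (by simpa using h))
  · have : P.Wz μ u = P.Tz μ u + ContinuousLinearMap.adjoint P.b (P.a u) := by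
      simp only [BSSetup.Wz, BSSetup.W, BSSetup.Tz, ContinuousLinearMap.sub_apply,
        ContinuousLinearMap.add_apply, ContinuousLinearMap.comp_apply]
      abel
    rw [this, hTu, hKu, map_neg]
    abel
end
end

section
/- Suppose Assumption (Ass) holds and that H_V ψ = λψ for some λ ∈ σ_c(H₀) (so λ is real and not an eigenvalue of H₀) and nonzero ψ ∈ Dom(H_V). Then g := Aψ ≠ 0 and K(λ + iε)g converges weakly to −g as ε → 0 (from above or below). -/
open ContinuousLinearMap

noncomputable section

namespace BSSetup

variable {H H' : Type*} [NormedAddCommGroup H] [InnerProductSpace ℂ H]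
  [CompleteSpace H] [NormedAddCommGroup H'] [InnerProductSpace ℂ H'] [CompleteSpace H']
  (P : BSSetup H H')

lemma adjoint_Tz (z : ℂ) :
    ContinuousLinearMap.adjoint (P.Tz z) = P.Tz ((starRingEnd ℂ) z) := by
  rw [← ContinuousLinearMap.star_eq_adjoint]
  show star (P.T - z • (P.S * P.S)) = P.T - (starRingEnd ℂ) z • (P.S * P.S)
  rw [star_sub, star_smul, star_mul, P.S_sa.star_eq, P.T_sa.star_eq, Complex.star_def]

lemma S_le (x : H) : ‖P.S x‖ ≤ ‖x‖ := by
  calc ‖P.S x‖ ≤ ‖P.S‖ * ‖x‖ := P.S.le_opNorm x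
  _ ≤ 1 * ‖x‖ := mul_le_mul_of_nonneg_right P.S_norm (norm_nonneg x)
  _ = ‖x‖ := one_mul _

lemma inner_self_ofReal (x : H) : (inner ℂ x x : ℂ) = ((‖x‖^2 : ℝ) : ℂ) := by
  rw [@inner_self_eq_norm_sq_to_K ℂ]
  norm_cast

lemma inner_S_sq (x : H) : (inner ℂ x ((P.S * P.S) x) : ℂ) = ((‖P.S x‖^2 : ℝ) : ℂ) := by
  rw [ContinuousLinearMap.mul_apply, ← ContinuousLinearMap.adjoint_inner_left,
    P.S_sa.adjoint_eq, inner_self_ofReal]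

lemma inner_T_real (x : H) : (inner ℂ x (P.T x) : ℂ).im = 0 := by
  have h := ContinuousLinearMap.adjoint_inner_left P.T x x
  rw [P.T_sa.adjoint_eq] at h
  have h2 : (starRingEnd ℂ) (inner ℂ x (P.T x) : ℂ) = inner ℂ x (P.T x) := by
    rw [inner_conj_symm]; exact h
  exact Complex.conj_eq_iff_im.mp h2

lemma im_inner_Tz (z : ℂ) (x : H) :
    (inner ℂ x (P.Tz z x) : ℂ).im = - z.im * ‖P.S x‖^2 := by
  have : P.Tz z x = P.T x - z • ((P.S * P.S) x) := rfl
  rw [this, inner_sub_right, inner_smul_right, P.inner_S_sq]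
  simp only [Complex.sub_im, Complex.mul_im, Complex.ofReal_re, Complex.ofReal_im,
    P.inner_T_real]
  ring

lemma norm_T_apply (x : H) : ‖P.T x‖ = ‖(1 - P.S * P.S) x‖ := by
  have hSS : IsSelfAdjoint (P.S * P.S) := by
    rw [IsSelfAdjoint, star_mul, P.S_sa.star_eq]
  have hOne : IsSelfAdjoint ((1 : H →L[ℂ] H) - P.S * P.S) :=
    IsSelfAdjoint.sub (IsSelfAdjoint.one _) hSS
  have h1 : (inner ℂ (P.T x) (P.T x) : ℂ)
      = inner ℂ ((1 - P.S * P.S) x) ((1 - P.S * P.S) x) := by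
    rw [← ContinuousLinearMap.adjoint_inner_left, P.T_sa.adjoint_eq]
    have e1 : P.T (P.T x) = ((1 - P.S * P.S) * (1 - P.S * P.S)) x := by
      rw [← P.T_sq]; rfl
    have e2 : ((1 - P.S * P.S) * (1 - P.S * P.S)) x
        = (1 - P.S * P.S) ((1 - P.S * P.S) x) := rfl
    rw [e1, e2, ← ContinuousLinearMap.adjoint_inner_left, hOne.adjoint_eq]
  have h2 : ‖P.T x‖^2 = ‖(1 - P.S * P.S) x‖^2 := by
    rw [inner_self_ofReal, inner_self_ofReal] at h1
    exact_mod_cast h1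
  have h3 := norm_nonneg (P.T x)
  have h4 := norm_nonneg ((1 - P.S * P.S) x)
  nlinarith [h2, h3, h4]

lemma norm_le_Tz (z : ℂ) (x : H) :
    |z.im| * ‖x‖ ≤ 4/3 * (|z.im| + 1 + ‖z‖^2) * ‖P.Tz z x‖ := by
  set n := ‖x‖ with hn
  set t := ‖P.Tz z x‖ with ht
  set s := ‖P.S x‖ with hs
  set d := |z.im| with hd
  have hn0 : 0 ≤ n := norm_nonneg _
  have ht0 : 0 ≤ t := norm_nonneg _
  have hs0 : 0 ≤ s := norm_nonneg _
  have hd0 : 0 ≤ d := abs_nonneg _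
  have hz0 : 0 ≤ ‖z‖ := norm_nonneg _
  -- d * s^2 ≤ n * t
  have h2 : d * s^2 ≤ n * t := by
    have him := P.im_inner_Tz z x
    have habs : |(inner ℂ x (P.Tz z x) : ℂ).im| ≤ n * t := by
      calc |(inner ℂ x (P.Tz z x) : ℂ).im| ≤ ‖(inner ℂ x (P.Tz z x) : ℂ)‖ :=
        Complex.abs_im_le_norm _
      _ ≤ n * t := norm_inner_le_norm _ _
    rw [him] at habs
    rw [abs_mul, abs_neg, abs_of_nonneg (sq_nonneg s)] at habs
    exact habs
  -- ‖T x‖ ≤ t + ‖z‖ * s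
  have hT : ‖P.T x‖ ≤ t + ‖z‖ * s := by
    have e : P.T x = P.Tz z x + z • ((P.S * P.S) x) := by
      simp [Tz, ContinuousLinearMap.sub_apply]
    rw [e]
    calc ‖P.Tz z x + z • ((P.S * P.S) x)‖ ≤ t + ‖z • ((P.S * P.S) x)‖ :=
      norm_add_le _ _
    _ ≤ t + ‖z‖ * s := by
        rw [norm_smul]
        have : ‖(P.S * P.S) x‖ ≤ s := P.S_le (P.S x)
        nlinarith
  -- n^2 ≤ n * ‖T x‖ + s^2
  have h1 : n^2 ≤ n * ‖P.T x‖ + s^2 := by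
    have hdec : (inner ℂ x x : ℂ) = inner ℂ x ((1 - P.S * P.S) x) + inner ℂ x ((P.S * P.S) x) := by
      rw [← inner_add_right]
      congr 1
      simp
    have hre : n^2 = (inner ℂ x ((1 - P.S * P.S) x) : ℂ).re + s^2 := by
      rw [inner_self_ofReal, P.inner_S_sq] at hdec
      have h5 := congrArg Complex.re hdec
      rw [Complex.ofReal_re, Complex.add_re, Complex.ofReal_re] at h5
      exact h5
    have hb : (inner ℂ x ((1 - P.S * P.S) x) : ℂ).re ≤ n * ‖P.T x‖ := by
      calc (inner ℂ x ((1 - P.S * P.S) x) : ℂ).re ≤ ‖(inner ℂ x ((1 - P.S * P.S) x) : ℂ)‖ :=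
        Complex.re_le_norm _
      _ ≤ n * ‖(1 - P.S * P.S) x‖ := norm_inner_le_norm _ _
      _ = n * ‖P.T x‖ := by rw [P.norm_T_apply]
    linarith
  have h1' : n^2 ≤ n * t + ‖z‖ * n * s + s^2 := by nlinarith
  rcases eq_or_lt_of_le hn0 with h | h
  · rw [← h, mul_zero]
    positivity
  · nlinarith [sq_nonneg (n - 2 * ‖z‖ * s), mul_le_mul_of_nonneg_left h1' hd0,
      mul_le_mul_of_nonneg_left h2 (by positivity : (0:ℝ) ≤ 1 + ‖z‖^2),
      mul_nonneg hd0 (mul_nonneg hn0 ht0), mul_nonneg (mul_nonneg hd0 hd0) (sq_nonneg s)]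

lemma Tz_injective (z : ℂ) (hz : z.im ≠ 0) : ∀ x : H, P.Tz z x = 0 → x = 0 := by
  intro x hx
  have h := P.norm_le_Tz z x
  rw [hx, norm_zero, mul_zero] at h
  have hd : 0 < |z.im| := abs_pos.mpr hz
  have : ‖x‖ ≤ 0 := by nlinarith
  exact norm_le_zero_iff.mp this

lemma isUnit_Tz (z : ℂ) (hz : z.im ≠ 0) : IsUnit (P.Tz z) := by
  have hd : 0 < |z.im| := abs_pos.mpr hz
  set C : ℝ := 4/3 * (|z.im| + 1 + ‖z‖^2) / |z.im| with hC
  have hC0 : 0 ≤ C := by positivity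
  have hbound : ∀ x : H, ‖x‖ ≤ C * ‖P.Tz z x‖ := by
    intro x
    have h := P.norm_le_Tz z x
    rw [hC, div_mul_eq_mul_div, le_div_iff₀ hd]
    nlinarith
  have hanti : AntilipschitzWith C.toNNReal (P.Tz z) := by
    apply ContinuousLinearMap.antilipschitz_of_bound
    intro x
    rw [Real.coe_toNNReal _ hC0]
    exact hbound x
  rw [ContinuousLinearMap.isUnit_iff_bijective,
    ContinuousLinearMap.bijective_iff_dense_range_and_antilipschitz]
  refine ⟨?_, ⟨_, hanti⟩⟩
  rw [Submodule.topologicalClosure_eq_top_iff, Submodule.eq_bot_iff]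
  intro x hx
  rw [Submodule.mem_orthogonal] at hx
  have hx0 : P.Tz ((starRingEnd ℂ) z) x = 0 := by
    rw [← P.adjoint_Tz]
    have hall : ∀ w : H, (inner ℂ (ContinuousLinearMap.adjoint (P.Tz z) x) w : ℂ) = 0 := by
      intro w
      rw [ContinuousLinearMap.adjoint_inner_left]
      rw [← inner_conj_symm]
      rw [hx (P.Tz z w) ⟨w, rfl⟩]
      simp
    have := hall (ContinuousLinearMap.adjoint (P.Tz z) x)
    exact inner_self_eq_zero.mp this
  refine P.Tz_injective ((starRingEnd ℂ) z) ?_ x hx0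
  simpa using hz

lemma Tz_inv_apply (z : ℂ) (hz : IsUnit (P.Tz z)) (y : H) :
    P.Tz z (Ring.inverse (P.Tz z) y) = y := by
  have h := Ring.mul_inverse_cancel (P.Tz z) hz
  calc P.Tz z (Ring.inverse (P.Tz z) y) = (P.Tz z * Ring.inverse (P.Tz z)) y := rfl
  _ = y := by rw [h]; rfl

lemma inv_Tz_apply (z : ℂ) (hz : IsUnit (P.Tz z)) (x : H) :
    Ring.inverse (P.Tz z) (P.Tz z x) = x := by
  have h := Ring.inverse_mul_cancel (P.Tz z) hz
  calc Ring.inverse (P.Tz z) (P.Tz z x) = (Ring.inverse (P.Tz z) * P.Tz z) x := rfl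
  _ = x := by rw [h]; rfl

lemma inv_Tz_bound (z : ℂ) (hz : z.im ≠ 0) (y : H) :
    |z.im| * ‖Ring.inverse (P.Tz z) y‖ ≤ 4/3 * (|z.im| + 1 + ‖z‖^2) * ‖y‖ := by
  have h := P.norm_le_Tz z (Ring.inverse (P.Tz z) y)
  rwa [P.Tz_inv_apply z (P.isUnit_Tz z hz)] at h

end BSSetup
set_option maxHeartbeats 1000000 in
/-- Theorem 3.3.  Under Assumption (Ass), if `H_V ψ = μ ψ` for some
`μ ∈ σ_c(H₀)` and nonzero `ψ = S u ∈ Dom(H_V)` (encoded by `u ≠ 0`, `(W - μ S²) u = 0`),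
then `g := Aψ = a u ≠ 0` and `K(μ + iε) g ⇀ -g` weakly as `ε → 0` (from above or
below), i.e. `⟪φ, K(μ+iε) g⟫ → -⟪φ, g⟫` for every `φ ∈ H'`. -/
theorem BSSetup.birman_schwinger_embedded
    {H H' : Type*} [NormedAddCommGroup H] [InnerProductSpace ℂ H]
    [CompleteSpace H] [NormedAddCommGroup H'] [InnerProductSpace ℂ H'] [CompleteSpace H']
    (P : BSSetup H H') (hAss : P.Ass) (μ : ℂ) (hμ : μ ∈ P.contSpec)
    (u : H) (hu : u ≠ 0) (heig : P.Wz μ u = 0) :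
    P.a u ≠ 0 ∧
    ∀ φ : H', Filter.Tendsto
      (fun ε : ℝ => (inner ℂ φ (P.K (μ + (ε:ℂ) * Complex.I) (P.a u)) : ℂ))
      (nhdsWithin 0 {0}ᶜ) (nhds (-(inner ℂ φ (P.a u) : ℂ))) := by
  obtain ⟨hnotunit, hinj, hdense⟩ := hμ
  -- μ is real
  have hμim : μ.im = 0 := by
    by_contra h
    exact hnotunit (P.isUnit_Tz μ h)
  -- key eigenvalue identity
  have hkey : P.Tz μ u = - (ContinuousLinearMap.adjoint P.b) (P.a u) := by
    have h1 : P.Tz μ u + (ContinuousLinearMap.adjoint P.b) (P.a u) = P.Wz μ u := by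
      simp only [Wz, W, Tz, ContinuousLinearMap.sub_apply, ContinuousLinearMap.add_apply,
        ContinuousLinearMap.coe_comp', Function.comp_apply]
      rw [sub_add_eq_add_sub]
    rw [heig] at h1
    exact eq_neg_of_add_eq_zero_left h1
  have hg : P.a u ≠ 0 := by
    intro h
    apply hu
    apply hinj u
    rw [hkey, h, map_zero, neg_zero]
  refine ⟨hg, ?_⟩
  intro φ
  -- imaginary part of μ + ε i
  have hzim : ∀ ε : ℝ, (μ + (ε:ℂ) * Complex.I).im = ε := by
    intro ε
    simp [hμim]
  -- operator splitting
  have hTzsplit : ∀ ε : ℝ, P.Tz (μ + (ε:ℂ) * Complex.I)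
      = P.Tz μ - ((ε:ℂ) * Complex.I) • (P.S * P.S) := by
    intro ε
    simp only [Tz, add_smul]
    rw [sub_sub]
  -- the eventual identity
  have hident : ∀ ε : ℝ, ε ≠ 0 →
      (inner ℂ φ (P.K (μ + (ε:ℂ) * Complex.I) (P.a u)) : ℂ)
        = -(inner ℂ φ (P.a u) : ℂ)
          - ((ε:ℂ) * Complex.I) * (inner ℂ (ContinuousLinearMap.adjoint P.a φ)
              (Ring.inverse (P.Tz (μ + (ε:ℂ) * Complex.I)) (P.S (P.S u))) : ℂ) := by
    intro ε hε
    have hU : IsUnit (P.Tz (μ + (ε:ℂ) * Complex.I)) := by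
      apply P.isUnit_Tz
      rw [hzim ε]
      exact hε
    set R := Ring.inverse (P.Tz (μ + (ε:ℂ) * Complex.I)) with hR
    set c : ℂ := (ε:ℂ) * Complex.I with hc
    have h1 : P.Tz (μ + (ε:ℂ) * Complex.I) u
        = -(ContinuousLinearMap.adjoint P.b) (P.a u) - c • (P.S (P.S u)) := by
      rw [hTzsplit ε, ContinuousLinearMap.sub_apply, hkey, ContinuousLinearMap.smul_apply,
        ContinuousLinearMap.mul_apply]
    have h3 := P.inv_Tz_apply _ hU u
    rw [h1, map_sub, map_neg, map_smul] at h3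
    have h2 : R ((ContinuousLinearMap.adjoint P.b) (P.a u)) = -u - c • R (P.S (P.S u)) := by
      have h5 := congrArg Neg.neg h3
      rw [neg_sub, sub_neg_eq_add] at h5
      rw [← h5, add_sub_cancel_left]
    have h4 : P.K (μ + (ε:ℂ) * Complex.I) (P.a u)
        = -(P.a u) - c • P.a (R (P.S (P.S u))) := by
      simp only [K, ContinuousLinearMap.comp_apply, ← hR]
      rw [h2, map_sub, map_neg, map_smul]
    rw [h4, inner_sub_right, inner_neg_right, inner_smul_right]
    congr 1
    rw [ContinuousLinearMap.adjoint_inner_left]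
  -- the error term tends to zero
  set w := ContinuousLinearMap.adjoint P.a φ with hw
  set v := P.S (P.S u) with hv
  set K0 : ℝ := 4/3 * (2 + (‖μ‖ + 1)^2) with hK0
  have hK00 : 0 ≤ K0 := by positivity
  have hbound : ∀ ε : ℝ, ε ≠ 0 → |ε| ≤ 1 → ∀ y : H,
      |ε| * ‖Ring.inverse (P.Tz (μ + (ε:ℂ) * Complex.I)) y‖ ≤ K0 * ‖y‖ := by
    intro ε hε hε1 y
    have h := P.inv_Tz_bound (μ + (ε:ℂ) * Complex.I) (by rw [hzim ε]; exact hε) y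
    rw [hzim ε] at h
    have hnz : ‖μ + (ε:ℂ) * Complex.I‖ ≤ ‖μ‖ + 1 := by
      calc ‖μ + (ε:ℂ) * Complex.I‖ ≤ ‖μ‖ + ‖(ε:ℂ) * Complex.I‖ := norm_add_le _ _
      _ = ‖μ‖ + |ε| := by
          rw [norm_mul, Complex.norm_I, Complex.norm_real, mul_one, Real.norm_eq_abs]
      _ ≤ ‖μ‖ + 1 := by linarith
    have h2 : 4/3 * (|ε| + 1 + ‖μ + (ε:ℂ) * Complex.I‖^2) * ‖y‖ ≤ K0 * ‖y‖ := by
      have hμ0 : 0 ≤ ‖μ‖ := norm_nonneg _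
      have hnz0 : 0 ≤ ‖μ + (ε:ℂ) * Complex.I‖ := norm_nonneg _
      have hy0 : 0 ≤ ‖y‖ := norm_nonneg _
      have : ‖μ + (ε:ℂ) * Complex.I‖^2 ≤ (‖μ‖ + 1)^2 := by nlinarith
      rw [hK0]
      nlinarith [abs_nonneg ε]
    linarith
  -- self-adjointness of Tz μ
  have hTzμ_sa : ContinuousLinearMap.adjoint (P.Tz μ) = P.Tz μ := by
    rw [P.adjoint_Tz]
    congr 1
    exact Complex.conj_eq_iff_im.mpr hμim
  -- the error term
  have hE : Filter.Tendsto
      (fun ε : ℝ => ((ε:ℂ) * Complex.I) * (inner ℂ w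
        (Ring.inverse (P.Tz (μ + (ε:ℂ) * Complex.I)) v) : ℂ))
      (nhdsWithin 0 {0}ᶜ) (nhds 0) := by
    rw [Metric.tendsto_nhdsWithin_nhds]
    intro δ hδ
    obtain ⟨y, hy⟩ := hdense.exists_dist_lt w
      (show (0:ℝ) < δ / (2 * (K0 * ‖v‖ + 1)) by positivity)
    refine ⟨min 1 (δ / (2 * (‖y‖ * ‖v‖ * (1 + K0) + 1))), by positivity, ?_⟩
    intro ε hεmem hεdist
    have hε : ε ≠ 0 := hεmem
    rw [Real.dist_eq, sub_zero] at hεdist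
    have hε1 : |ε| ≤ 1 := le_of_lt (lt_of_lt_of_le hεdist (min_le_left _ _))
    have hε2 : |ε| < δ / (2 * (‖y‖ * ‖v‖ * (1 + K0) + 1)) :=
      lt_of_lt_of_le hεdist (min_le_right _ _)
    rw [dist_zero_right]
    set R := Ring.inverse (P.Tz (μ + (ε:ℂ) * Complex.I)) with hR
    have hRv := hbound ε hε hε1 v
    rw [← hR] at hRv
    -- decompose the inner product
    have hdec : (inner ℂ w (R v) : ℂ)
        = inner ℂ (w - P.Tz μ y) (R v) + inner ℂ (P.Tz μ y) (R v) := by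
      rw [← inner_add_left, sub_add_cancel]
    -- second term
    have hsecond : (inner ℂ (P.Tz μ y) (R v) : ℂ)
        = inner ℂ y v + ((ε:ℂ) * Complex.I) * inner ℂ y (P.S (P.S (R v))) := by
      have e1 : (inner ℂ (P.Tz μ y) (R v) : ℂ) = inner ℂ y (P.Tz μ (R v)) := by
        conv_lhs => rw [← hTzμ_sa]
        exact ContinuousLinearMap.adjoint_inner_left _ _ _
      have e2 : P.Tz μ (R v) = v + ((ε:ℂ) * Complex.I) • (P.S (P.S (R v))) := by
        have e3 : P.Tz μ (R v) = P.Tz (μ + (ε:ℂ) * Complex.I) (R v)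
            + ((ε:ℂ) * Complex.I) • ((P.S * P.S) (R v)) := by
          rw [hTzsplit ε, ContinuousLinearMap.sub_apply, ContinuousLinearMap.smul_apply,
            sub_add_cancel]
        rw [e3, P.Tz_inv_apply _ (P.isUnit_Tz _ (by rw [hzim ε]; exact hε)) v]
        rfl
      rw [e1, e2, inner_add_right, inner_smul_right]
    -- norms
    have hnorm1 : ‖(inner ℂ (w - P.Tz μ y) (R v) : ℂ)‖ ≤ ‖w - P.Tz μ y‖ * ‖R v‖ :=
      norm_inner_le_norm _ _
    have hyv : ‖(inner ℂ y v : ℂ)‖ ≤ ‖y‖ * ‖v‖ := norm_inner_le_norm _ _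
    have hySSR : ‖(inner ℂ y (P.S (P.S (R v))) : ℂ)‖ ≤ ‖y‖ * ‖R v‖ := by
      calc ‖(inner ℂ y (P.S (P.S (R v))) : ℂ)‖ ≤ ‖y‖ * ‖P.S (P.S (R v))‖ :=
        norm_inner_le_norm _ _
      _ ≤ ‖y‖ * ‖R v‖ := by
          have := (P.S_le (P.S (R v))).trans (P.S_le (R v))
          exact mul_le_mul_of_nonneg_left this (norm_nonneg y)
    have hcnorm : ‖((ε:ℂ) * Complex.I)‖ = |ε| := by
      rw [norm_mul, Complex.norm_I, Complex.norm_real, mul_one, Real.norm_eq_abs]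
    have hwy : ‖w - P.Tz μ y‖ < δ / (2 * (K0 * ‖v‖ + 1)) := by
      rw [← dist_eq_norm]
      exact hy
    -- put it together
    have htotal : ‖((ε:ℂ) * Complex.I) * (inner ℂ w (R v) : ℂ)‖
        ≤ (δ / (2 * (K0 * ‖v‖ + 1))) * (K0 * ‖v‖)
          + |ε| * (‖y‖ * ‖v‖) + |ε| * (‖y‖ * (K0 * ‖v‖)) := by
      rw [norm_mul, hcnorm, hdec]
      have step1 : ‖(inner ℂ (w - P.Tz μ y) (R v) : ℂ) + inner ℂ (P.Tz μ y) (R v)‖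
          ≤ ‖w - P.Tz μ y‖ * ‖R v‖ + ‖(inner ℂ (P.Tz μ y) (R v) : ℂ)‖ := by
        calc _ ≤ ‖(inner ℂ (w - P.Tz μ y) (R v) : ℂ)‖ + ‖(inner ℂ (P.Tz μ y) (R v) : ℂ)‖ :=
          norm_add_le _ _
        _ ≤ _ := by linarith
      have step2 : ‖(inner ℂ (P.Tz μ y) (R v) : ℂ)‖
          ≤ ‖y‖ * ‖v‖ + |ε| * (‖y‖ * ‖R v‖) := by
        rw [hsecond]
        calc ‖(inner ℂ y v : ℂ) + ((ε:ℂ) * Complex.I) * inner ℂ y (P.S (P.S (R v)))‖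
            ≤ ‖(inner ℂ y v : ℂ)‖ + ‖((ε:ℂ) * Complex.I) * (inner ℂ y (P.S (P.S (R v))) : ℂ)‖ :=
          norm_add_le _ _
        _ ≤ ‖y‖ * ‖v‖ + |ε| * (‖y‖ * ‖R v‖) := by
            rw [norm_mul, hcnorm]
            have := mul_le_mul_of_nonneg_left hySSR (abs_nonneg ε)
            linarith
      have hwy' : 0 ≤ ‖w - P.Tz μ y‖ := norm_nonneg _
      have hRv0 : 0 ≤ ‖R v‖ := norm_nonneg _
      have habs0 : 0 ≤ |ε| := abs_nonneg ε
      have hεRv : |ε| * ‖R v‖ ≤ K0 * ‖v‖ := hRv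
      have hv0 : 0 ≤ ‖v‖ := norm_nonneg _
      have hy0 : 0 ≤ ‖y‖ := norm_nonneg _
      -- |ε| * (A + B) ≤ |ε|*A + |ε|*B and bounds
      calc |ε| * ‖(inner ℂ (w - P.Tz μ y) (R v) : ℂ) + inner ℂ (P.Tz μ y) (R v)‖
          ≤ |ε| * (‖w - P.Tz μ y‖ * ‖R v‖ + (‖y‖ * ‖v‖ + |ε| * (‖y‖ * ‖R v‖))) := by
            apply mul_le_mul_of_nonneg_left _ habs0
            linarith
      _ ≤ (δ / (2 * (K0 * ‖v‖ + 1))) * (K0 * ‖v‖)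
          + |ε| * (‖y‖ * ‖v‖) + |ε| * (‖y‖ * (K0 * ‖v‖)) := by
            have t1 : |ε| * (‖w - P.Tz μ y‖ * ‖R v‖)
                ≤ (δ / (2 * (K0 * ‖v‖ + 1))) * (K0 * ‖v‖) := by
              have e : |ε| * (‖w - P.Tz μ y‖ * ‖R v‖)
                  = ‖w - P.Tz μ y‖ * (|ε| * ‖R v‖) := by ring
              rw [e]
              have := mul_le_mul_of_nonneg_left hεRv hwy'
              have h2 := mul_le_mul_of_nonneg_right (le_of_lt hwy)
                (by positivity : (0:ℝ) ≤ K0 * ‖v‖)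
              linarith
            have t2 : |ε| * (|ε| * (‖y‖ * ‖R v‖)) ≤ |ε| * (‖y‖ * (K0 * ‖v‖)) := by
              have e : |ε| * (|ε| * (‖y‖ * ‖R v‖)) = |ε| * (‖y‖ * (|ε| * ‖R v‖)) := by ring
              rw [e]
              apply mul_le_mul_of_nonneg_left _ habs0
              exact mul_le_mul_of_nonneg_left hεRv hy0
            nlinarith
    -- final numeric estimate
    have hfin1 : (δ / (2 * (K0 * ‖v‖ + 1))) * (K0 * ‖v‖) < δ / 2 := by
      rw [div_mul_eq_mul_div, div_lt_div_iff₀ (by positivity) (by norm_num)]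
      have hv0 : 0 ≤ ‖v‖ := norm_nonneg _
      nlinarith
    have hfin2 : |ε| * (‖y‖ * ‖v‖) + |ε| * (‖y‖ * (K0 * ‖v‖)) < δ / 2 := by
      have e : |ε| * (‖y‖ * ‖v‖) + |ε| * (‖y‖ * (K0 * ‖v‖))
          = |ε| * (‖y‖ * ‖v‖ * (1 + K0)) := by ring
      rw [e]
      have hpos : (0:ℝ) < ‖y‖ * ‖v‖ * (1 + K0) + 1 := by positivity
      have h0 : (0:ℝ) ≤ ‖y‖ * ‖v‖ * (1 + K0) := by positivity
      have ha : |ε| * (‖y‖ * ‖v‖ * (1 + K0)) ≤ |ε| * (‖y‖ * ‖v‖ * (1 + K0) + 1) := by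
        apply mul_le_mul_of_nonneg_left _ (abs_nonneg ε)
        linarith
      have hb := mul_lt_mul_of_pos_right hε2 hpos
      have h1 : |ε| * (‖y‖ * ‖v‖ * (1 + K0))
          < (δ / (2 * (‖y‖ * ‖v‖ * (1 + K0) + 1))) * (‖y‖ * ‖v‖ * (1 + K0) + 1) :=
        lt_of_le_of_lt ha hb
      have e2 : (δ / (2 * (‖y‖ * ‖v‖ * (1 + K0) + 1))) * (‖y‖ * ‖v‖ * (1 + K0) + 1)
          = δ / 2 := by
        field_simp
      rw [e2] at h1
      exact h1
    linarith
  -- finish: congruence of the two functions on the punctured neighborhood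
  have hconst : Filter.Tendsto
      (fun _ : ℝ => -(inner ℂ φ (P.a u) : ℂ)) (nhdsWithin 0 {0}ᶜ)
      (nhds (-(inner ℂ φ (P.a u) : ℂ))) := tendsto_const_nhds
  have hsub := hconst.sub hE
  rw [sub_zero] at hsub
  refine hsub.congr' ?_
  have hmem : ∀ᶠ ε : ℝ in nhdsWithin 0 {0}ᶜ, ε ∈ ({0}ᶜ : Set ℝ) :=
    eventually_mem_nhdsWithin
  filter_upwards [hmem] with ε hε
  rw [hident ε hε]
end
end

section
/- Suppose Assumption (Ass) holds. If λ ∈ σ_p(H_V) and λ ∉ σ(H₀), then ‖K(λ)‖ ≥ 1. -/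
open ContinuousLinearMap

noncomputable section

/-- Corollary 3.4 (i).  Under Assumption (Ass), if `μ ∈ σ_p(H_V)`
(encoded by an eigenvector `ψ = S u`, `u ≠ 0`, `(W - μ S²) u = 0`) and `μ ∉ σ(H₀)`,
then `‖K(μ)‖ ≥ 1`. -/
theorem BSSetup.norm_K_ge_one_of_eigenvalue
    {H H' : Type*} [NormedAddCommGroup H] [InnerProductSpace ℂ H]
    [CompleteSpace H] [NormedAddCommGroup H'] [InnerProductSpace ℂ H'] [CompleteSpace H']
    (P : BSSetup H H') (hAss : P.Ass) (μ : ℂ) (hμ : IsUnit (P.Tz μ))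
    (u : H) (hu : u ≠ 0) (heig : P.Wz μ u = 0) :
    1 ≤ ‖P.K μ‖ := by
  classical
  set v := P.a u with hv
  -- decompose the eigenvalue equation
  have hop : P.Wz μ = P.Tz μ + (ContinuousLinearMap.adjoint P.b ∘L P.a) := by
    simp only [BSSetup.Wz, BSSetup.W, BSSetup.Tz]; abel
  have hTz : P.Tz μ u = -(ContinuousLinearMap.adjoint P.b v) := by
    have h : P.Tz μ u + (ContinuousLinearMap.adjoint P.b) (P.a u) = 0 := by
      have := heig
      rw [hop] at this
      simpa using this
    rw [hv]
    linear_combination (norm := abel) h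
  -- the inverse cancels
  have hinvmul : Ring.inverse (P.Tz μ) * P.Tz μ = 1 := Ring.inverse_mul_cancel _ hμ
  have hcancel : ∀ x : H, Ring.inverse (P.Tz μ) (P.Tz μ x) = x := by
    intro x
    have := congrArg (fun f : H →L[ℂ] H => f x) hinvmul
    simpa [ContinuousLinearMap.mul_apply] using this
  -- v is an eigenvector of K μ with eigenvalue -1
  have hKv : P.K μ v = -v := by
    have : Ring.inverse (P.Tz μ) ((ContinuousLinearMap.adjoint P.b) v) = -u := by
      rw [show (ContinuousLinearMap.adjoint P.b) v = -(P.Tz μ u) by rw [hTz]; simp]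
      simp [hcancel u]
    simp only [BSSetup.K, ContinuousLinearMap.comp_apply, this, map_neg, hv]
    rw [← hv, this, map_neg, ← hv]
  -- v ≠ 0
  have hvne : v ≠ 0 := by
    intro h0
    apply hu
    have : P.Tz μ u = 0 := by rw [hTz, h0]; simp
    have := hcancel u
    rw [this] at *
    simpa [‹P.Tz μ u = 0›] using (hcancel u).symm
  -- conclude
  have hnorm : ‖v‖ ≤ ‖P.K μ‖ * ‖v‖ := by
    calc ‖v‖ = ‖P.K μ v‖ := by rw [hKv, norm_neg]
      _ ≤ ‖P.K μ‖ * ‖v‖ := (P.K μ).le_opNorm v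
  have hvpos : 0 < ‖v‖ := norm_pos_iff.mpr hvne
  nlinarith [hnorm, hvpos]
end
end

section
/- Suppose Assumption (Ass) holds. Let λ ∈ ℂ \ σ(H₀) and suppose {ψ_n} ⊂ Dom(H_V) with ‖ψ_n‖ = 1 for all n and (H_V − λ)ψ_n → 0. Then liminf_n ‖Aψ_n‖ > 0, and with φ_n := Aψ_n, (φ_n, K(λ)φ_n)/‖φ_n‖² → −1 as n → ∞. Consequently, ‖K(λ)‖ ≥ 1. -/
open ContinuousLinearMap

noncomputable section

/-- If `1 + X ∘L Y` is invertible then so is `1 + Y ∘L X`, with inverse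
`1 - Y (1 + X Y)⁻¹ X`. -/
lemma aux_one_add_comp {H H' : Type*} [NormedAddCommGroup H] [InnerProductSpace ℂ H]
    [NormedAddCommGroup H'] [InnerProductSpace ℂ H']
    (X : H →L[ℂ] H') (Y : H' →L[ℂ] H) (h : IsUnit (1 + X ∘L Y)) :
    IsUnit (1 + Y ∘L X) := by
  obtain ⟨C, hC1, hC2⟩ := isUnit_iff_exists.mp h
  have hC1' : ∀ v, C v + X (Y (C v)) = v := by
    intro v
    have := ContinuousLinearMap.ext_iff.mp hC1 v
    simpa [ContinuousLinearMap.mul_apply, add_comm] using this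
  have hC2' : ∀ v, C v + C (X (Y v)) = v := by
    intro v
    have := ContinuousLinearMap.ext_iff.mp hC2 v
    simpa [ContinuousLinearMap.mul_apply, map_add] using this
  refine isUnit_iff_exists.mpr ⟨1 - Y ∘L (C ∘L X), ?_, ?_⟩
  · ext x
    have h1 : X (Y (C (X x))) = X x - C (X x) := by
      have := hC1' (X x); linear_combination (norm := abel) this
    simp only [ContinuousLinearMap.mul_apply, ContinuousLinearMap.coe_comp',
      Function.comp_apply, ContinuousLinearMap.add_apply, ContinuousLinearMap.sub_apply,
      ContinuousLinearMap.one_apply, map_sub, h1]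
    abel
  · ext x
    have h3 : Y (C (X x)) + Y (C (X (Y (X x)))) = Y (X x) := by
      rw [← map_add, hC2' (X x)]
    simp only [ContinuousLinearMap.mul_apply, ContinuousLinearMap.coe_comp',
      Function.comp_apply, ContinuousLinearMap.add_apply, ContinuousLinearMap.sub_apply,
      ContinuousLinearMap.one_apply, map_add]
    generalize hq : Y (C (X (Y (X x)))) = q at h3 ⊢
    rw [← h3]
    abel


/-- Theorem 5.1 and Corollary 5.2.  Under Assumption (Ass), let
`μ ∈ ℂ \ σ(H₀)` and let `ψ n = S (u n) ∈ Dom(H_V)` with `‖ψ n‖ = 1`,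
`H_V (ψ n) = y n` (i.e. `W (u n) = S (y n)`) and `(H_V - μ) ψ n = y n - μ • ψ n → 0`.
Then `liminf ‖A ψ n‖ = liminf ‖a (u n)‖ > 0`, and with `φ n := a (u n)`,
`⟪φ n, K(μ) (φ n)⟫ / ‖φ n‖² → -1`.  Consequently `‖K(μ)‖ ≥ 1`. -/
theorem BSSetup.essential_spectrum_BS
    {H H' : Type*} [NormedAddCommGroup H] [InnerProductSpace ℂ H]
    [CompleteSpace H] [NormedAddCommGroup H'] [InnerProductSpace ℂ H'] [CompleteSpace H']
    (P : BSSetup H H') (hAss : P.Ass) (μ : ℂ) (hμ : IsUnit (P.Tz μ))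
    (u y : ℕ → H) (hdom : ∀ n, P.W (u n) = P.S (y n))
    (hnorm : ∀ n, ‖P.S (u n)‖ = 1)
    (hconv : Filter.Tendsto (fun n => y n - μ • P.S (u n)) Filter.atTop (nhds 0)) :
    0 < Filter.liminf (fun n => ‖P.a (u n)‖) Filter.atTop ∧
    Filter.Tendsto
      (fun n => (inner ℂ (P.a (u n)) (P.K μ (P.a (u n))) : ℂ) / ((‖P.a (u n)‖ : ℂ))^2)
      Filter.atTop (nhds (-1)) ∧
    1 ≤ ‖P.K μ‖ := by
  classical
  obtain ⟨lam, hlam, hK0⟩ := hAss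
  set r : ℕ → H := fun n => y n - μ • P.S (u n) with hrdef
  have hr0 : Filter.Tendsto r Filter.atTop (nhds 0) := hconv
  set φ : ℕ → H' := fun n => P.a (u n) with hφdef
  -- Basic identities
  have hWT : ∀ z : ℂ, P.Wz z = P.Tz z + (ContinuousLinearMap.adjoint P.b) ∘L P.a := by
    intro z
    simp only [BSSetup.Wz, BSSetup.Tz, BSSetup.W]
    abel
  have hWzμ : ∀ n, P.Wz μ (u n) = P.S (r n) := by
    intro n
    simp only [BSSetup.Wz, ContinuousLinearMap.sub_apply, ContinuousLinearMap.smul_apply,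
      ContinuousLinearMap.mul_apply, hdom n, hrdef, map_sub, map_smul]
  have hTzμ : ∀ n, P.Tz μ (u n) = P.S (r n) - (ContinuousLinearMap.adjoint P.b) (φ n) := by
    intro n
    have h := hWzμ n
    rw [hWT μ] at h
    simp only [ContinuousLinearMap.add_apply, ContinuousLinearMap.coe_comp',
      Function.comp_apply] at h
    rw [← h, hφdef]
    abel
  -- the inverse of `Tz μ`
  set Jμ : H →L[ℂ] H := Ring.inverse (P.Tz μ) with hJμdef
  have hJμ1 : Jμ * P.Tz μ = 1 := Ring.inverse_mul_cancel _ hμ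
  have hu : ∀ n, u n = Jμ (P.S (r n)) - Jμ ((ContinuousLinearMap.adjoint P.b) (φ n)) := by
    intro n
    rw [← map_sub, ← hTzμ n, ← ContinuousLinearMap.mul_apply, hJμ1,
      ContinuousLinearMap.one_apply]
  -- the Birman-Schwinger identity  `φ n + K μ (φ n) = (a Jμ S) (r n)`
  have hKφ : ∀ n, φ n + P.K μ (φ n) = (P.a ∘L (Jμ ∘L P.S)) (r n) := by
    intro n
    have h := congrArg P.a (hu n)
    rw [map_sub] at h
    have hK : P.K μ (φ n) = P.a (Jμ ((ContinuousLinearMap.adjoint P.b) (φ n))) := rfl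
    simp only [ContinuousLinearMap.coe_comp', Function.comp_apply]
    rw [hK]
    exact eq_sub_iff_add_eq.mp h
  set s : ℕ → H' := fun n => φ n + P.K μ (φ n) with hsdef
  have hs0 : Filter.Tendsto s Filter.atTop (nhds 0) := by
    have h1 := ((P.a ∘L (Jμ ∘L P.S)).continuous.tendsto 0).comp hr0
    simp only [map_zero] at h1
    have : s = fun n => (P.a ∘L (Jμ ∘L P.S)) (r n) := funext hKφ
    rw [this]
    exact h1
  -- `Wz lam` is invertible, thanks to (Ass)
  have hWlam : IsUnit (P.Wz lam) := by
    have h2 : IsUnit (1 + P.K lam) := by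
      have h1 := spectrum.notMem_iff.mp hK0
      rw [map_neg, map_one] at h1
      have h2 : IsUnit (-(1 + P.K lam)) := by rwa [neg_add, ← sub_eq_add_neg]
      exact (IsUnit.neg_iff _).mp h2
    have h3 : IsUnit (1 + ((Ring.inverse (P.Tz lam)) ∘L (ContinuousLinearMap.adjoint P.b)) ∘L P.a) :=
      aux_one_add_comp P.a ((Ring.inverse (P.Tz lam)) ∘L (ContinuousLinearMap.adjoint P.b)) h2
    have h4 : P.Wz lam = P.Tz lam *
        (1 + ((Ring.inverse (P.Tz lam)) ∘L (ContinuousLinearMap.adjoint P.b)) ∘L P.a) := by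
      rw [mul_add, mul_one, hWT lam]
      congr 1
      rw [ContinuousLinearMap.mul_def, ← ContinuousLinearMap.comp_assoc,
        ← ContinuousLinearMap.comp_assoc,
        show P.Tz lam ∘L Ring.inverse (P.Tz lam) = 1 from by
          rw [← ContinuousLinearMap.mul_def, Ring.mul_inverse_cancel _ hlam],
        ContinuousLinearMap.comp_assoc]
      simp [ContinuousLinearMap.one_def]
    rw [h4]
    exact hlam.mul h3
  -- boundedness of `u`, hence of `φ`
  set JW : H →L[ℂ] H := Ring.inverse (P.Wz lam) with hJWdef
  have hJW1 : JW * P.Wz lam = 1 := Ring.inverse_mul_cancel _ hWlam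
  have huJ : ∀ n, JW (P.Wz lam (u n)) = u n := by
    intro n
    rw [← ContinuousLinearMap.mul_apply, hJW1, ContinuousLinearMap.one_apply]
  have hWlamu : ∀ n, P.Wz lam (u n) = P.S (y n) - lam • P.S (P.S (u n)) := by
    intro n
    simp only [BSSetup.Wz, ContinuousLinearMap.sub_apply, ContinuousLinearMap.smul_apply,
      ContinuousLinearMap.mul_apply, hdom n]
  obtain ⟨R, hRub⟩ := hr0.norm.bddAbove_range
  have hR : ∀ n, ‖r n‖ ≤ R := fun n => hRub ⟨n, rfl⟩
  have hy : ∀ n, ‖y n‖ ≤ R + ‖μ‖ := by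
    intro n
    have h1 : y n = r n + μ • P.S (u n) := (sub_add_cancel _ _).symm
    rw [h1]
    calc ‖r n + μ • P.S (u n)‖ ≤ ‖r n‖ + ‖μ • P.S (u n)‖ := norm_add_le _ _
      _ = ‖r n‖ + ‖μ‖ * ‖P.S (u n)‖ := by rw [norm_smul]
      _ ≤ R + ‖μ‖ * 1 := add_le_add (hR n)
          (mul_le_mul_of_nonneg_left (le_of_eq (hnorm n)) (norm_nonneg μ))
      _ = R + ‖μ‖ := by ring
  set M : ℝ := ‖JW‖ * (‖P.S‖ * (R + ‖μ‖) + ‖lam‖ * ‖P.S‖) with hMdef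
  have hM : ∀ n, ‖u n‖ ≤ M := by
    intro n
    rw [← huJ n]
    calc ‖JW (P.Wz lam (u n))‖ ≤ ‖JW‖ * ‖P.Wz lam (u n)‖ := JW.le_opNorm _
      _ ≤ ‖JW‖ * (‖P.S‖ * (R + ‖μ‖) + ‖lam‖ * ‖P.S‖) := by
          gcongr
          rw [hWlamu n]
          calc ‖P.S (y n) - lam • P.S (P.S (u n))‖
              ≤ ‖P.S (y n)‖ + ‖lam • P.S (P.S (u n))‖ := norm_sub_le _ _
            _ = ‖P.S (y n)‖ + ‖lam‖ * ‖P.S (P.S (u n))‖ := by rw [norm_smul]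
            _ ≤ ‖P.S‖ * (R + ‖μ‖) + ‖lam‖ * (‖P.S‖ * ‖P.S (u n)‖) := by
                gcongr
                · calc ‖P.S (y n)‖ ≤ ‖P.S‖ * ‖y n‖ := P.S.le_opNorm _
                    _ ≤ ‖P.S‖ * (R + ‖μ‖) := by
                        gcongr
                        exact hy n
                · exact P.S.le_opNorm _
            _ = ‖P.S‖ * (R + ‖μ‖) + ‖lam‖ * ‖P.S‖ := by rw [hnorm n, mul_one]
  have hφbdd : ∀ n, ‖φ n‖ ≤ ‖P.a‖ * M := by
    intro n
    calc ‖φ n‖ ≤ ‖P.a‖ * ‖u n‖ := P.a.le_opNorm _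
      _ ≤ ‖P.a‖ * M := by gcongr; exact hM n
  -- lower bound for `‖φ n‖`
  set c : ℝ := ‖P.S ∘L (Jμ ∘L (ContinuousLinearMap.adjoint P.b))‖ with hcdef
  set C1 : ℝ := ‖P.S ∘L (Jμ ∘L P.S)‖ with hC1def
  have hSu : ∀ n, P.S (u n) = (P.S ∘L (Jμ ∘L P.S)) (r n)
      - (P.S ∘L (Jμ ∘L (ContinuousLinearMap.adjoint P.b))) (φ n) := by
    intro n
    conv_lhs => rw [hu n]
    simp [map_sub]
  have hev1 : ∀ᶠ n in Filter.atTop, C1 * ‖r n‖ < 1/2 := by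
    have h1 : Filter.Tendsto (fun n => C1 * ‖r n‖) Filter.atTop (nhds 0) := by
      have := hr0.norm.const_mul C1
      simpa using this
    exact h1.eventually_lt_const (by norm_num)
  have hev2 : ∀ᶠ n in Filter.atTop, 1/2 ≤ c * ‖φ n‖ := by
    filter_upwards [hev1] with n hn
    have h1 : (1:ℝ) = ‖P.S (u n)‖ := (hnorm n).symm
    have h2 : ‖P.S (u n)‖ ≤ C1 * ‖r n‖ + c * ‖φ n‖ := by
      rw [hSu n]
      calc ‖(P.S ∘L (Jμ ∘L P.S)) (r n)
          - (P.S ∘L (Jμ ∘L (ContinuousLinearMap.adjoint P.b))) (φ n)‖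
          ≤ ‖(P.S ∘L (Jμ ∘L P.S)) (r n)‖
            + ‖(P.S ∘L (Jμ ∘L (ContinuousLinearMap.adjoint P.b))) (φ n)‖ := norm_sub_le _ _
        _ ≤ C1 * ‖r n‖ + c * ‖φ n‖ := by
            gcongr
            · exact (P.S ∘L (Jμ ∘L P.S)).le_opNorm _
            · exact (P.S ∘L (Jμ ∘L (ContinuousLinearMap.adjoint P.b))).le_opNorm _
    linarith
  have hc : 0 < c := by
    obtain ⟨n, hn⟩ := hev2.exists
    nlinarith [norm_nonneg (φ n), norm_nonneg (P.S ∘L (Jμ ∘L (ContinuousLinearMap.adjoint P.b)))]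
  set δ : ℝ := 1 / (2 * c) with hδdef
  have hδ : 0 < δ := by positivity
  have hφlow : ∀ᶠ n in Filter.atTop, δ ≤ ‖φ n‖ := by
    filter_upwards [hev2] with n hn
    rw [hδdef, div_le_iff₀ (by positivity)]
    linarith
  -- make all auxiliary definitions opaque to avoid heavy unfolding
  have hsn : ∀ n, s n = φ n + P.K μ (φ n) := fun _ => rfl
  have hKs : ∀ n, P.K μ (φ n) = s n - φ n := fun n => eq_sub_of_add_eq' rfl
  have hgoal1 : (fun n => ‖P.a (u n)‖) = fun n => ‖φ n‖ := rfl
  have hgoal2 : (fun n => (inner ℂ (P.a (u n)) (P.K μ (P.a (u n))) : ℂ) / ((‖P.a (u n)‖ : ℂ))^2)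
      = fun n => (inner ℂ (φ n) (P.K μ (φ n)) : ℂ) / ((‖φ n‖ : ℂ))^2 := rfl
  clear_value s φ δ c C1 M JW Jμ r
  clear hsdef hφdef hrdef hJμdef hJWdef hMdef hcdef hC1def hδdef
  clear hKφ hu hTzμ hWzμ hWT hSu huJ hWlamu hJW1 hJμ1 hR hRub hy hM hev1 hWlam hr0 hconv hdom
  refine ⟨?_, ?_, ?_⟩
  · -- liminf positive
    rw [hgoal1]
    have hb : Filter.IsBoundedUnder (· ≤ ·) Filter.atTop (fun n => ‖φ n‖) :=
      Filter.isBoundedUnder_of ⟨‖P.a‖ * M, hφbdd⟩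
    exact lt_of_lt_of_le hδ (Filter.le_liminf_of_le hb.isCoboundedUnder_ge hφlow)
  · -- the Rayleigh quotients tend to -1
    rw [hgoal2, ← tendsto_sub_nhds_zero_iff]
    have ha : Filter.Tendsto (fun n => ‖s n‖ / δ) Filter.atTop (nhds 0) := by
      have h := hs0.norm.div_const δ
      rwa [norm_zero, zero_div] at h
    refine squeeze_zero_norm' ?_ ha
    filter_upwards [hφlow] with n hn
    have hp : 0 < ‖φ n‖ := lt_of_lt_of_le hδ hn
    have hne : ((‖φ n‖ : ℂ))^2 ≠ 0 := by
      simp [Complex.ofReal_ne_zero, hp.ne']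
    have hin : (inner ℂ (φ n) (s n) : ℂ) = ((‖φ n‖ : ℂ))^2 + inner ℂ (φ n) (P.K μ (φ n)) := by
      rw [hsn n, inner_add_right, inner_self_eq_norm_sq_to_K]
      rfl
    have heq : (inner ℂ (φ n) (P.K μ (φ n)) : ℂ) / ((‖φ n‖ : ℂ))^2 - (-1)
        = (inner ℂ (φ n) (s n) : ℂ) / ((‖φ n‖ : ℂ))^2 := by
      rw [hin, add_div, div_self hne]
      ring
    rw [heq, norm_div]
    have hq : ‖((‖φ n‖ : ℂ))^2‖ = ‖φ n‖^2 := by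
      rw [norm_pow, Complex.norm_real, norm_norm]
    rw [hq]
    calc ‖(inner ℂ (φ n) (s n) : ℂ)‖ / ‖φ n‖^2
        ≤ (‖φ n‖ * ‖s n‖) / ‖φ n‖^2 := by
          gcongr
          exact norm_inner_le_norm _ _
      _ = ‖s n‖ / ‖φ n‖ := by rw [sq, mul_div_mul_left _ _ hp.ne']
      _ ≤ ‖s n‖ / δ := by gcongr
  · -- norm bound
    have ht : Filter.Tendsto (fun n => 1 - ‖s n‖ / δ) Filter.atTop (nhds 1) := by
      have h := Filter.Tendsto.sub
        (tendsto_const_nhds : Filter.Tendsto (fun _ : ℕ => (1:ℝ)) Filter.atTop (nhds 1))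
        (hs0.norm.div_const δ)
      rwa [norm_zero, zero_div, sub_zero] at h
    refine le_of_tendsto ht ?_
    filter_upwards [hφlow] with n hn
    have hp : 0 < ‖φ n‖ := lt_of_lt_of_le hδ hn
    have h1 : ‖φ n‖ - ‖s n‖ ≤ ‖P.K μ (φ n)‖ := by
      rw [hKs n]
      calc ‖φ n‖ - ‖s n‖ ≤ ‖φ n - s n‖ := norm_sub_norm_le _ _
        _ = ‖s n - φ n‖ := norm_sub_rev _ _
    have h2 : ‖P.K μ (φ n)‖ ≤ ‖P.K μ‖ * ‖φ n‖ := (P.K μ).le_opNorm _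
    calc 1 - ‖s n‖ / δ ≤ 1 - ‖s n‖ / ‖φ n‖ := by gcongr
      _ = (‖φ n‖ - ‖s n‖) / ‖φ n‖ := by field_simp
      _ ≤ (‖P.K μ‖ * ‖φ n‖) / ‖φ n‖ := by gcongr; exact h1.trans h2
      _ = ‖P.K μ‖ := by rw [mul_div_assoc, div_self hp.ne', mul_one]
end
end
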